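/- Let G = G₁ *_H G₂ be an amalgamated free product with injective structure maps φᵢ : H → Gᵢ. If c₁, c₂, …, cₙ (n ≥ 1) is a reduced sequence in G (each cᵢ lies in one of the factors G₁ or G₂, consecutive cᵢ, cᵢ₊₁ lie in different factors, no cᵢ with n > 1 lies in the image of H, and if n = 1 then c₁ ≠ 1), then the product c₁ c₂ ⋯ cₙ ≠ 1 in G. -/

import Mathlib

open Monoid

/-- In the amalgamated free product `G₁ *_H G₂` (here `PushoutI φ` over the
two-element index type `Bool`, with injective structure maps `φ b : H →* G b`), the product of
a reduced sequence `c₁, …, cₙ` (`n ≥ 1`, each `cₖ` in a factor, consecutive terms in different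
factors, no term in the image of `H` when `n > 1`, and `c₁ ≠ 1` when `n = 1`) is not `1`. -/
theorem stmt_1 {H : Type} [Group H] (G : Bool → Type) [∀ b, Group (G b)]
    (φ : ∀ b, H →* G b) (hφ : ∀ b, Function.Injective (φ b))
    (n : ℕ) (hn : 1 ≤ n) (idx : Fin n → Bool) (c : ∀ k : Fin n, G (idx k))
    (halt : ∀ (k : ℕ) (hk : k + 1 < n),
      idx ⟨k, Nat.lt_of_succ_lt hk⟩ ≠ idx ⟨k + 1, hk⟩)
    (hred : 1 < n → ∀ k : Fin n, c k ∉ (φ (idx k)).range)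
    (hone : n = 1 → ∀ k : Fin n, c k ≠ 1) :
    (List.ofFn fun k : Fin n => PushoutI.of (φ := φ) (idx k) (c k)).prod ≠ 1 := by
  rcases eq_or_lt_of_le hn with h1 | h1
  · -- n = 1
    subst h1
    simp only [List.ofFn_succ, List.ofFn_zero, List.prod_cons, List.prod_nil, mul_one]
    intro h
    exact hone rfl 0 (PushoutI.of_injective hφ (idx 0) (by simpa using h))
  · -- n > 1
    have hne : ∀ k : Fin n, c k ≠ 1 := by
      intro k hk
      exact hred h1 k (hk ▸ ⟨1, by simp⟩)
    let w : CoprodI.Word G :=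
      ⟨List.ofFn fun k => ⟨idx k, c k⟩, by
        intro l hl
        rw [List.mem_ofFn] at hl
        rcases hl with ⟨k, rfl⟩
        exact hne k, by
        rw [List.isChain_iff_getElem]
        intro i hi
        simp only [List.length_ofFn] at hi
        simp only [List.getElem_ofFn]
        exact fun h => halt i (by omega) (by simpa using h)⟩
    have hred' : PushoutI.Reduced φ w := by
      intro g hg
      rw [List.mem_ofFn] at hg
      rcases hg with ⟨k, rfl⟩
      exact hred h1 k
    intro hcontra
    have hprod : PushoutI.ofCoprodI (φ := φ) w.prod =
        (List.ofFn fun k : Fin n => PushoutI.of (φ := φ) (idx k) (c k)).prod := by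
      show PushoutI.ofCoprodI ((List.ofFn fun k : Fin n =>
        (⟨idx k, c k⟩ : Σ i, G i)).map fun l => CoprodI.of l.2).prod = _
      rw [List.map_ofFn, map_list_prod, List.map_ofFn]
      congr 1
    have hmem : PushoutI.ofCoprodI (φ := φ) w.prod ∈ (PushoutI.base φ).range := by
      rw [hprod, hcontra]; exact one_mem _
    have := hred'.eq_empty_of_mem_range hφ hmem
    have hlen : w.toList.length = n := by simp [w]
    rw [this] at hlen
    simp [CoprodI.Word.empty] at hlen
    omega
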